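/- Let N_n be the number of points among n i.i.d. uniform samples on a region of measure μ ∈ (0,∞) ⊆ ℝ^d that fall within Euclidean distance r_n = γ(log n/n)^{1/d} of a fixed measurable set S whose r-neighborhood has measure at most C·r for all small r > 0. Then E[N_n] ∈ O(n^{1-1/d}(log n)^{1/d}), and in particular E[N_n]·log(n) ∈ O(n). -/

import Mathlib

open MeasureTheory ProbabilityTheory Metric Classical

/-- Lemma 5 key estimate: the expected number of i.i.d. uniform samples (out of `n`)
falling within distance `r_n = γ(log n/n)^{1/d}` of a set `S` whose `r`-neighborhood
has measure at most `C·r` for small `r` is `O(n^{1-1/d}(log n)^{1/d})`; in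
particular the expected number times `log n` is `O(n)`. -/
theorem expected_samples_near_obstacles {d : ℕ} (hd : 1 ≤ d)
    {Ω : Type*} [MeasureSpace Ω] [IsProbabilityMeasure (ℙ : Measure Ω)]
    (A : Set (EuclideanSpace ℝ (Fin d))) (hAmeas : MeasurableSet A)
    (hpos : 0 < volume A) (hfin : volume A < ⊤)
    (S : Set (EuclideanSpace ℝ (Fin d))) (C : ℝ) (hC : 0 < C)
    (hS : ∃ r₀ > (0 : ℝ), ∀ r ∈ Set.Ioc (0 : ℝ) r₀,
      volume (thickening r S) ≤ ENNReal.ofReal (C * r))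
    (γ : ℝ) (hγ : 0 < γ)
    (r : ℕ → ℝ) (hr : ∀ n : ℕ, r n = γ * (Real.log n / n) ^ ((1 : ℝ) / d))
    (Y : ℕ → Ω → EuclideanSpace ℝ (Fin d))
    (hmeas : ∀ i, Measurable (Y i))
    (hindep : iIndepFun Y ℙ)
    (hunif : ∀ i, Measure.map (Y i) ℙ = (volume A)⁻¹ • volume.restrict A)
    (N : ℕ → Ω → ℕ)
    (hN : ∀ n ω, N n ω = ((Finset.range n).filter fun i => Y i ω ∈ thickening (r n) S).card) :
    (fun n : ℕ => (∫⁻ ω, (N n ω : ENNReal) ∂ℙ).toReal) =O[Filter.atTop]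
        (fun n : ℕ => (n : ℝ) ^ (1 - (1 : ℝ) / d) * Real.log n ^ ((1 : ℝ) / d)) ∧
      (fun n : ℕ => (∫⁻ ω, (N n ω : ENNReal) ∂ℙ).toReal * Real.log n) =O[Filter.atTop]
        (fun n : ℕ => (n : ℝ)) := by
  have hdR : (0 : ℝ) < d := by exact_mod_cast hd
  have hd' : (0 : ℝ) < 1 / d := by positivity
  -- Step 1: exact formula for the expectation.
  have key : ∀ n : ℕ, ∫⁻ ω, (N n ω : ENNReal) ∂ℙ
      = n * ((volume A)⁻¹ * volume.restrict A (thickening (r n) S)) := by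
    intro n
    set T := thickening (r n) S with hTdef
    have hTm : MeasurableSet T := isOpen_thickening.measurableSet
    have h1 : ∀ ω, ((N n ω : ENNReal))
        = ∑ i ∈ Finset.range n, T.indicator (fun _ => (1 : ENNReal)) (Y i ω) := by
      intro ω
      rw [hN, Finset.card_filter]
      push_cast
      refine Finset.sum_congr rfl fun i _ => ?_
      by_cases h : Y i ω ∈ T <;> simp [Set.indicator_apply, h, ← hTdef]
    calc ∫⁻ ω, (N n ω : ENNReal) ∂ℙ
        = ∫⁻ ω, ∑ i ∈ Finset.range n, T.indicator (fun _ => (1 : ENNReal)) (Y i ω) ∂ℙ :=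
          lintegral_congr h1
      _ = ∑ i ∈ Finset.range n, ∫⁻ ω, T.indicator (fun _ => (1 : ENNReal)) (Y i ω) ∂ℙ :=
          lintegral_finset_sum _ fun i _ => (measurable_const.indicator hTm).comp (hmeas i)
      _ = ∑ i ∈ Finset.range n, ((volume A)⁻¹ * volume.restrict A T) := by
          refine Finset.sum_congr rfl fun i _ => ?_
          rw [← lintegral_map (measurable_const.indicator hTm) (hmeas i),
            hunif i]
          rw [show (fun _ : EuclideanSpace ℝ (Fin d) => (1 : ENNReal)) = 1 from rfl,
            lintegral_indicator_one hTm, Measure.smul_apply, smul_eq_mul]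
      _ = n * ((volume A)⁻¹ * volume.restrict A T) := by
          rw [Finset.sum_const, Finset.card_range, nsmul_eq_mul]
  obtain ⟨r₀, hr₀, hvol⟩ := hS
  -- r n → 0.
  have hrlim : Filter.Tendsto (fun n : ℕ => r n) Filter.atTop (nhds 0) := by
    have h1 : Filter.Tendsto (fun x : ℝ => Real.log x / x) Filter.atTop (nhds 0) :=
      Real.isLittleO_log_id_atTop.tendsto_div_nhds_zero
    have h2 : Filter.Tendsto (fun n : ℕ => Real.log n / n) Filter.atTop (nhds 0) :=
      h1.comp tendsto_natCast_atTop_atTop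
    have h3 : ContinuousAt (fun x : ℝ => x ^ ((1 : ℝ) / d)) 0 :=
      Real.continuousAt_rpow_const 0 _ (Or.inr hd'.le)
    have h4 := h3.tendsto.comp h2
    rw [Real.zero_rpow (ne_of_gt hd')] at h4
    have heq : (fun n : ℕ => r n) = fun n : ℕ => γ * ((Real.log n / n) ^ ((1 : ℝ) / d)) :=
      funext hr
    rw [heq]
    simpa using h4.const_mul γ
  set K : ℝ := (volume A).toReal⁻¹ * C * γ with hK
  have hK0 : 0 ≤ K := by positivity
  -- Step 2: eventual bound.
  have hev : ∀ᶠ n : ℕ in Filter.atTop, (∫⁻ ω, (N n ω : ENNReal) ∂ℙ).toReal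
      ≤ K * ((n : ℝ) ^ (1 - (1 : ℝ) / d) * Real.log n ^ ((1 : ℝ) / d)) := by
    have hsmall : ∀ᶠ n : ℕ in Filter.atTop, r n < r₀ := hrlim.eventually (gt_mem_nhds hr₀)
    filter_upwards [hsmall, Filter.eventually_ge_atTop 2] with n hn hn2
    have hn1 : (1 : ℝ) < n := by exact_mod_cast hn2.trans_lt' one_lt_two |>.trans_le le_rfl
    have hnpos : (0 : ℝ) < n := by linarith
    have hlog : (0 : ℝ) < Real.log n := Real.log_pos hn1
    have hrn : 0 < r n := by
      rw [hr n]
      exact mul_pos hγ (Real.rpow_pos_of_pos (div_pos hlog hnpos) _)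
    have hTm : MeasurableSet (thickening (r n) S) := isOpen_thickening.measurableSet
    have hvolT : volume.restrict A (thickening (r n) S) ≤ ENNReal.ofReal (C * r n) := by
      refine le_trans ?_ (hvol (r n) ⟨hrn, hn.le⟩)
      rw [Measure.restrict_apply hTm]
      exact measure_mono Set.inter_subset_left
    have hle : ∫⁻ ω, (N n ω : ENNReal) ∂ℙ
        ≤ (n : ENNReal) * ((volume A)⁻¹ * ENNReal.ofReal (C * r n)) := by
      rw [key n]; gcongr
    have hfin2 : (n : ENNReal) * ((volume A)⁻¹ * ENNReal.ofReal (C * r n)) ≠ ⊤ := by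
      apply ENNReal.mul_ne_top (by simp)
      exact ENNReal.mul_ne_top (ENNReal.inv_ne_top.mpr hpos.ne') ENNReal.ofReal_ne_top
    have htr := ENNReal.toReal_mono hfin2 hle
    rw [ENNReal.toReal_mul, ENNReal.toReal_mul, ENNReal.toReal_inv,
      ENNReal.toReal_ofReal (by positivity), ENNReal.toReal_natCast] at htr
    refine htr.trans_eq ?_
    rw [hr n, Real.div_rpow hlog.le hnpos.le, Real.rpow_sub hnpos, Real.rpow_one, hK]
    ring
  -- First big-O.
  have h1 : (fun n : ℕ => (∫⁻ ω, (N n ω : ENNReal) ∂ℙ).toReal) =O[Filter.atTop]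
      (fun n : ℕ => (n : ℝ) ^ (1 - (1 : ℝ) / d) * Real.log n ^ ((1 : ℝ) / d)) := by
    rw [Asymptotics.isBigO_iff]
    refine ⟨K, ?_⟩
    filter_upwards [hev] with n hn
    rw [Real.norm_eq_abs, abs_of_nonneg ENNReal.toReal_nonneg]
    exact hn.trans (mul_le_mul_of_nonneg_left (le_abs_self _) hK0)
  refine ⟨h1, ?_⟩
  -- Second big-O.
  have hO2 : (fun x : ℝ => x ^ (1 - (1 : ℝ) / d) * Real.log x ^ ((1 : ℝ) / d) * Real.log x)
      =O[Filter.atTop] (fun x : ℝ => x) := by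
    have hlo : (fun x : ℝ => Real.log x ^ ((1 : ℝ) / d + 1)) =o[Filter.atTop]
        (fun x : ℝ => x ^ ((1 : ℝ) / d)) :=
      isLittleO_log_rpow_rpow_atTop _ hd'
    have h2 : (fun x : ℝ => x ^ (1 - (1 : ℝ) / d) * Real.log x ^ ((1 : ℝ) / d + 1))
        =o[Filter.atTop] (fun x : ℝ => x ^ (1 - (1 : ℝ) / d) * x ^ ((1 : ℝ) / d)) :=
      (Asymptotics.isBigO_refl (fun x : ℝ => x ^ (1 - (1 : ℝ) / d)) _).mul_isLittleO hlo
    refine (h2.isBigO.congr' ?_ ?_)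
    · filter_upwards [Filter.eventually_ge_atTop (2 : ℝ)] with x hx
      have hlogx : (0 : ℝ) < Real.log x := Real.log_pos (by linarith)
      rw [Real.rpow_add_one hlogx.ne' ((1 : ℝ) / d)]
      ring
    · filter_upwards [Filter.eventually_gt_atTop (0 : ℝ)] with x hx
      rw [← Real.rpow_add hx]
      norm_num
  have h2' := hO2.comp_tendsto tendsto_natCast_atTop_atTop
  exact (h1.mul (Asymptotics.isBigO_refl (fun n : ℕ => Real.log n) _)).trans h2'
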